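/- For k ≥ 1, define the polynomial map M_k from real sequences c : ℕ → ℝ to ℝ by the classical cumulant-to-moment formula M_k(c) = ∑_{π} ∏_{B ∈ π} (|B| − 1)! · c(|B|), where the sum is over all partitions π of a k-element set and |B| is the cardinality of the block B. Let c* be the cumulant sequence of the standard Gaussian, c*(j) = 1 if j = 2 and 0 otherwise. Then for every sequence f : ℕ → ℝ, the function ε ↦ M_k(c* + ε·f) has derivative at ε = 0 equal to ∑_{n=1}^{k} a_{k,n} · f(n), where a_{k,n} = k!/(n · ((k−n)/2)! · 2^{(k−n)/2}) if n ≤ k and k − n is even and nonnegative, and a_{k,n} = 0 otherwise. That is, the linearization of the cumulant-to-moment transform at the standard Gaussian is the lower-triangular matrix A = (a_{k,n}), where a_{n+2j,n} is (n−1)! times the number of partitions of n+2j elements into classes exactly one of which contains n elements and the remaining j classes are pairs. -/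

import Mathlib

open Finset

/-- The classical cumulant-to-moment transform: the `k`-th moment as a polynomial
function of the cumulant sequence `c`, `M_k(c) = ∑_π ∏_{B ∈ π} (|B|−1)! c(|B|)`,
the sum running over all partitions of a `k`-element set. -/
noncomputable def cumulantToMoment (k : ℕ) (c : ℕ → ℝ) : ℝ :=
  ∑ π : Finpartition (Finset.univ : Finset (Fin k)),
    ∏ B ∈ π.parts, ((B.card - 1).factorial : ℝ) * c B.card

/-- The cumulant sequence of the standard Gaussian: `c*(2) = 1` and `c*(j) = 0`
otherwise. -/
noncomputable def gaussianCumulant : ℕ → ℝ := fun j => if j = 2 then 1 else 0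

/-- The entries of the linearization of the cumulant-to-moment transform at the
standard Gaussian: `a_{k,n} = k!/(n ((k−n)/2)! 2^{(k−n)/2})` when `n ≤ k` and `k − n`
is even, and `0` otherwise; `a_{n+2j,n}` is `(n−1)!` times the number of partitions of
`n+2j` elements into one class of `n` elements and `j` pairs. -/
noncomputable def clA (k n : ℕ) : ℝ :=
  if n ≤ k ∧ (k - n) % 2 = 0 then
    (k.factorial : ℝ) / (n * ((k - n) / 2).factorial * 2 ^ ((k - n) / 2))
  else 0

namespace ClAux

variable {α : Type*} [DecidableEq α]

/-- `P` is (the parts of) a partition of `s`. -/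
def IsPartn (s : Finset α) (P : Finset (Finset α)) : Prop :=
  P.sup id = s ∧ (∀ B ∈ P, ∀ C ∈ P, B ≠ C → Disjoint B C) ∧ ∅ ∉ P

instance (s : Finset α) (P : Finset (Finset α)) : Decidable (IsPartn s P) := by
  unfold IsPartn; infer_instance

lemma subset_of_isPartn {s : Finset α} {P : Finset (Finset α)} (h : IsPartn s P)
    {B : Finset α} (hB : B ∈ P) : B ⊆ s :=
  h.1 ▸ Finset.le_sup (f := id) hB

/-- The finset of all partitions of `s`. -/
def partn (s : Finset α) : Finset (Finset (Finset α)) :=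
  (s.powerset.powerset).filter (IsPartn s)

lemma mem_partn {s : Finset α} {P : Finset (Finset α)} : P ∈ partn s ↔ IsPartn s P := by
  simp only [partn, mem_filter, mem_powerset, and_iff_right_iff_imp]
  intro h B hB
  simpa using subset_of_isPartn h hB

lemma sum_finpartition {M : Type*} [AddCommMonoid M] (s : Finset α)
    (g : Finset (Finset α) → M) :
    ∑ π : Finpartition s, g π.parts = ∑ P ∈ partn s, g P := by
  refine Finset.sum_nbij (fun π => π.parts) ?_ ?_ ?_ ?_
  · intro π _
    rw [mem_partn]
    exact ⟨π.sup_parts, fun B hB C hC hne => π.disjoint hB hC hne,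
      by simpa using π.not_bot_mem⟩
  · intro π _ π' _ h
    exact Finpartition.ext h
  · intro P hP
    rw [mem_coe, mem_partn] at hP
    refine ⟨⟨P, ?_, hP.1, by simpa using hP.2.2⟩, Finset.mem_coe.mpr (mem_univ _), rfl⟩
    exact Finset.supIndep_iff_pairwiseDisjoint.mpr fun B hB C hC hne => hP.2.1 B hB C hC hne
  · intro π _
    rfl

/-- The part of `P` containing `a`. -/
def partOf (P : Finset (Finset α)) (a : α) : Finset α :=
  (P.filter (fun B => a ∈ B)).sup id

lemma exists_mem_partn {s : Finset α} {P : Finset (Finset α)} (h : IsPartn s P)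
    {a : α} (ha : a ∈ s) : ∃ B ∈ P, a ∈ B := by
  have : a ∈ P.sup id := h.1.symm ▸ ha
  simpa using Finset.mem_sup.mp this

lemma partOf_eq {s : Finset α} {P : Finset (Finset α)} (h : IsPartn s P)
    {B : Finset α} {a : α} (hB : B ∈ P) (ha : a ∈ B) : partOf P a = B := by
  have hf : P.filter (fun C => a ∈ C) = {B} := by
    ext C
    simp only [mem_filter, mem_singleton]
    constructor
    · rintro ⟨hC, haC⟩
      by_contra hne
      exact Finset.disjoint_left.mp (h.2.1 C hC B hB hne) haC ha
    · rintro rfl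
      exact ⟨hB, ha⟩
  rw [partOf, hf, Finset.sup_singleton, id_eq]

lemma partOf_mem {s : Finset α} {P : Finset (Finset α)} (h : IsPartn s P)
    {a : α} (ha : a ∈ s) : partOf P a ∈ P ∧ a ∈ partOf P a := by
  obtain ⟨B, hB, haB⟩ := exists_mem_partn h ha
  rw [partOf_eq h hB haB]
  exact ⟨hB, haB⟩

lemma isPartn_erase {s : Finset α} {P : Finset (Finset α)} (h : IsPartn s P)
    {B : Finset α} (hB : B ∈ P) : IsPartn (s \ B) (P.erase B) := by
  refine ⟨?_, fun C hC D hD hne => h.2.1 C (mem_of_mem_erase hC) D (mem_of_mem_erase hD) hne,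
    fun hmem => h.2.2 (mem_of_mem_erase hmem)⟩
  ext x
  simp only [Finset.mem_sup, id_eq, mem_sdiff]
  constructor
  · rintro ⟨C, hC, hxC⟩
    have hCP := mem_of_mem_erase hC
    refine ⟨subset_of_isPartn h hCP hxC, fun hxB => ?_⟩
    exact Finset.disjoint_left.mp (h.2.1 C hCP B hB (ne_of_mem_erase hC)) hxC hxB
  · rintro ⟨hxs, hxB⟩
    obtain ⟨C, hC, hxC⟩ := exists_mem_partn h hxs
    exact ⟨C, mem_erase.mpr ⟨fun e => hxB (e ▸ hxC), hC⟩, hxC⟩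

lemma isPartn_insert {s B : Finset α} {Q : Finset (Finset α)} (h : IsPartn (s \ B) Q)
    (hBs : B ⊆ s) (hBne : B.Nonempty) : IsPartn s (insert B Q) := by
  have hdisj : ∀ C ∈ Q, Disjoint B C := fun C hC =>
    Finset.disjoint_left.mpr fun x hxB hxC =>
      (mem_sdiff.mp (subset_of_isPartn h hC hxC)).2 hxB
  refine ⟨?_, ?_, ?_⟩
  · rw [Finset.sup_insert, h.1, id_eq]
    show B ∪ (s \ B) = s
    rw [Finset.union_sdiff_of_subset hBs]
  · intro C hC D hD hne
    rcases mem_insert.mp hC with rfl | hC'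
    · rcases mem_insert.mp hD with rfl | hD'
      · exact absurd rfl hne
      · exact hdisj D hD'
    · rcases mem_insert.mp hD with rfl | hD'
      · exact (hdisj C hC').symm
      · exact h.2.1 C hC' D hD' hne
  · intro hmem
    rcases mem_insert.mp hmem with e | hQ
    · exact hBne.ne_empty e.symm
    · exact h.2.2 hQ

lemma not_mem_of_isPartn_sdiff {s B : Finset α} {Q : Finset (Finset α)}
    (h : IsPartn (s \ B) Q) (hBne : B.Nonempty) : B ∉ Q := fun hB => by
  obtain ⟨x, hx⟩ := hBne
  exact (mem_sdiff.mp (subset_of_isPartn h hB hx)).2 hx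

/-- Number of perfect matchings of an `m`-element set. -/
def M' : ℕ → ℕ
  | 0 => 1
  | 1 => 0
  | (m + 2) => (m + 1) * M' m

lemma M'_two (m : ℕ) : M' (m + 2) = (m + 1) * M' m := rfl

lemma M'_odd : ∀ j, M' (2 * j + 1) = 0
  | 0 => rfl
  | (j + 1) => by
    have : 2 * (j + 1) + 1 = (2 * j + 1) + 2 := by ring
    rw [this, M'_two, M'_odd j, mul_zero]

lemma M'_spec : ∀ j, M' (2 * j) * (j.factorial * 2 ^ j) = (2 * j).factorial
  | 0 => by simp [M']
  | (j + 1) => by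
    have h := M'_spec j
    have e1 : 2 * (j + 1) = (2 * j) + 2 := by ring
    rw [e1, M'_two]
    rw [show (2 * j + 2).factorial = (2*j+2) * ((2*j+1) * (2*j).factorial) by
      rw [Nat.factorial_succ, Nat.factorial_succ], Nat.factorial_succ j, pow_succ]
    rw [← h]; ring


/-- Perfect matchings of `s` (as partitions with all parts of size 2). -/
def matchn (s : Finset α) : Finset (Finset (Finset α)) :=
  (partn s).filter (fun P => ∀ B ∈ P, B.card = 2)

lemma pair_decomp {B : Finset α} {a : α} (hcard : B.card = 2) (ha : a ∈ B)
    (hne : (B.erase a).Nonempty) [LinearOrder α] :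
    B = {a, (B.erase a).min' hne} ∧ (B.erase a).min' hne ≠ a := by
  have h1 : (B.erase a).card = 1 := by
    rw [Finset.card_erase_of_mem ha, hcard]
  obtain ⟨c, hc⟩ := Finset.card_eq_one.mp h1
  have hmin : (B.erase a).min' hne = c := by
    have hm : (B.erase a).min' hne ∈ ({c} : Finset α) := by
      rw [← hc]; exact Finset.min'_mem _ _
    exact Finset.mem_singleton.mp hm
  constructor
  · rw [hmin, show ({a, c} : Finset α) = insert a {c} from rfl, ← hc,
      Finset.insert_erase ha]
  · rw [hmin]
    have : c ∈ B.erase a := by rw [hc]; exact Finset.mem_singleton_self c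
    exact Finset.ne_of_mem_erase this

lemma card_matchn [LinearOrder α] :
    ∀ (n : ℕ) (s : Finset α), s.card = n → (matchn s).card = M' n := by
  intro n
  induction n using Nat.strong_induction_on with
  | _ n ih =>
    intro s hs
    rcases Nat.eq_zero_or_pos n with rfl | hn
    · have hse : s = ∅ := Finset.card_eq_zero.mp hs
      subst hse
      have : matchn (∅ : Finset α) = {∅} := by
        ext P
        simp only [matchn, mem_filter, mem_partn, mem_singleton]
        constructor
        · rintro ⟨hP, hall⟩
          rw [Finset.eq_empty_iff_forall_notMem]
          intro B hB
          have h2 : B.card = 2 := hall B hB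
          have h0 : B = ∅ := Finset.subset_empty.mp (subset_of_isPartn hP hB)
          rw [h0, Finset.card_empty] at h2
          exact absurd h2 (by norm_num)
        · rintro rfl
          exact ⟨⟨by simp, by simp, by simp⟩, by simp⟩
      simp [this, M']
    · obtain ⟨a, ha⟩ := Finset.card_pos.mp (hs ▸ hn)
      have key : (matchn s).card
          = ((s.erase a).sigma (fun b => matchn (s \ {a, b}))).card := by
        have hmem : ∀ P ∈ matchn s, IsPartn s P ∧ ∀ B ∈ P, B.card = 2 := by
          intro P hP
          have := Finset.mem_filter.mp hP
          exact ⟨mem_partn.mp this.1, this.2⟩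
        have hptne : ∀ P (hP : P ∈ matchn s), ((partOf P a).erase a).Nonempty := by
          intro P hP
          obtain ⟨hPp, hall⟩ := hmem P hP
          obtain ⟨hpm, hap⟩ := partOf_mem hPp ha
          have : ((partOf P a).erase a).card = 1 := by
            rw [Finset.card_erase_of_mem hap, hall _ hpm]
          rw [← Finset.card_pos, this]
          exact Nat.one_pos
        refine Finset.card_bij'
          (fun P hP => ⟨((partOf P a).erase a).min' (hptne P hP), P.erase (partOf P a)⟩)
          (fun x _ => insert ({a, x.1} : Finset α) x.2) ?_ ?_ ?_ ?_
        · -- forward maps into sigma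
          intro P hP
          obtain ⟨hPp, hall⟩ := hmem P hP
          obtain ⟨hpm, hap⟩ := partOf_mem hPp ha
          obtain ⟨hBeq, hbna⟩ := pair_decomp (hall _ hpm) hap (hptne P hP)
          set b := ((partOf P a).erase a).min' (hptne P hP) with hb
          rw [Finset.mem_sigma]
          constructor
          · refine Finset.mem_erase.mpr ⟨hbna, ?_⟩
            have : b ∈ partOf P a := by rw [hBeq]; simp
            exact subset_of_isPartn hPp hpm this
          · have hsd : s \ partOf P a = s \ {a, b} := by rw [← hBeq]
            rw [matchn, Finset.mem_filter, mem_partn, ← hsd]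
            exact ⟨isPartn_erase hPp hpm,
              fun B hB => hall B (Finset.mem_of_mem_erase hB)⟩
        · -- backward maps into matchn s
          rintro ⟨b, Q⟩ hx
          rw [Finset.mem_sigma] at hx
          obtain ⟨hb, hQ⟩ := hx
          obtain ⟨hbna, hbs⟩ := Finset.mem_erase.mp hb
          obtain ⟨hQp, hQall⟩ : IsPartn (s \ {a, b}) Q ∧ ∀ B ∈ Q, B.card = 2 := by
            have := Finset.mem_filter.mp hQ
            exact ⟨mem_partn.mp this.1, this.2⟩
          have hpairs : ({a, b} : Finset α) ⊆ s := by
            intro x hx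
            rcases Finset.mem_insert.mp hx with rfl | hx
            · exact ha
            · rw [Finset.mem_singleton.mp hx]; exact hbs
          have hpairne : ({a, b} : Finset α).Nonempty := ⟨a, by simp⟩
          rw [matchn, Finset.mem_filter, mem_partn]
          refine ⟨isPartn_insert hQp hpairs hpairne, ?_⟩
          intro B hB
          rcases Finset.mem_insert.mp hB with rfl | hB'
          · exact Finset.card_pair (fun h => hbna h.symm)
          · exact hQall B hB'
        · -- left inverse
          intro P hP
          obtain ⟨hPp, hall⟩ := hmem P hP
          obtain ⟨hpm, hap⟩ := partOf_mem hPp ha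
          obtain ⟨hBeq, _⟩ := pair_decomp (hall _ hpm) hap (hptne P hP)
          simp only
          rw [← hBeq, Finset.insert_erase hpm]
        · -- right inverse
          rintro ⟨b, Q⟩ hx
          rw [Finset.mem_sigma] at hx
          obtain ⟨hb, hQ⟩ := hx
          obtain ⟨hbna, hbs⟩ := Finset.mem_erase.mp hb
          obtain ⟨hQp, hQall⟩ : IsPartn (s \ {a, b}) Q ∧ ∀ B ∈ Q, B.card = 2 := by
            have := Finset.mem_filter.mp hQ
            exact ⟨mem_partn.mp this.1, this.2⟩
          have hpairs : ({a, b} : Finset α) ⊆ s := by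
            intro x hx
            rcases Finset.mem_insert.mp hx with rfl | hx
            · exact ha
            · rw [Finset.mem_singleton.mp hx]; exact hbs
          have hIns : IsPartn s (insert ({a, b} : Finset α) Q) :=
            isPartn_insert hQp hpairs ⟨a, by simp⟩
          have hpo : partOf (insert ({a, b} : Finset α) Q) a = {a, b} :=
            partOf_eq hIns (Finset.mem_insert_self _ _) (by simp)
          have hnotmem : ({a, b} : Finset α) ∉ Q :=
            not_mem_of_isPartn_sdiff hQp ⟨a, by simp⟩
          have herase : (({a, b} : Finset α)).erase a = {b} := by
            rw [show ({a, b} : Finset α) = insert a {b} from rfl,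
              Finset.erase_insert (fun hm => hbna (Finset.mem_singleton.mp hm).symm)]
          have hmin : ∀ hne, ((partOf (insert ({a, b} : Finset α) Q) a).erase a).min' hne = b := by
            intro hne
            simp_rw [hpo, herase]
            exact Finset.min'_singleton b
          refine Sigma.ext (by simpa using hmin _) (heq_of_eq ?_)
          show (insert ({a, b} : Finset α) Q).erase (partOf (insert ({a, b} : Finset α) Q) a) = Q
          rw [hpo, Finset.erase_insert hnotmem]
      rw [key, Finset.card_sigma]
      have hterm : ∀ b ∈ s.erase a, (matchn (s \ {a, b})).card = M' (n - 2) := by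
        intro b hb
        obtain ⟨hbna, hbs⟩ := Finset.mem_erase.mp hb
        have hsub : ({a, b} : Finset α) ⊆ s := by
          intro x hx
          rcases Finset.mem_insert.mp hx with rfl | hx
          · exact ha
          · rw [Finset.mem_singleton.mp hx]; exact hbs
        refine ih (n - 2) (by omega) _ ?_
        rw [Finset.card_sdiff_of_subset hsub, Finset.card_pair (fun h => hbna h.symm), hs]
      rw [Finset.sum_congr rfl hterm, Finset.sum_const, smul_eq_mul,
        Finset.card_erase_of_mem ha, hs]
      obtain _ | _ | m := n
      · omega
      · simp [M']
      · rw [show m + 1 + 1 - 1 = m + 1 by rfl, show m + 1 + 1 - 2 = m by rfl, M'_two]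


lemma card_pairs [LinearOrder α] (s : Finset α) (n : ℕ) (hn : 1 ≤ n) :
    ((((partn s).sigma fun P => P).filter
        fun x => x.2.card = n ∧ ∀ B ∈ x.1.erase x.2, B.card = 2)).card
      = s.card.choose n * M' (s.card - n) := by
  have key : ((((partn s).sigma fun P => P).filter
        fun x => x.2.card = n ∧ ∀ B ∈ x.1.erase x.2, B.card = 2)).card
      = ((s.powersetCard n).sigma fun S => matchn (s \ S)).card := by
    refine Finset.card_bij' (fun x _ => ⟨x.2, x.1.erase x.2⟩)
      (fun y _ => ⟨insert y.1 y.2, y.1⟩) ?_ ?_ ?_ ?_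
    · rintro ⟨P, B⟩ hx
      obtain ⟨hmem, hcard, hrest⟩ := Finset.mem_filter.mp hx
      obtain ⟨hP, hBP⟩ := Finset.mem_sigma.mp hmem
      rw [mem_partn] at hP
      rw [Finset.mem_sigma]
      constructor
      · exact Finset.mem_powersetCard.mpr ⟨subset_of_isPartn hP hBP, hcard⟩
      · rw [matchn, Finset.mem_filter, mem_partn]
        exact ⟨isPartn_erase hP hBP, hrest⟩
    · rintro ⟨S, Q⟩ hy
      obtain ⟨hS, hQ⟩ := Finset.mem_sigma.mp hy
      obtain ⟨hSs, hScard⟩ := Finset.mem_powersetCard.mp hS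
      obtain ⟨hQp, hQall⟩ : IsPartn (s \ S) Q ∧ ∀ B ∈ Q, B.card = 2 := by
        have := Finset.mem_filter.mp hQ
        exact ⟨mem_partn.mp this.1, this.2⟩
      have hSne : S.Nonempty := by rw [← Finset.card_pos, hScard]; exact hn
      have hSQ : S ∉ Q := not_mem_of_isPartn_sdiff hQp hSne
      refine Finset.mem_filter.mpr ⟨?_, hScard, ?_⟩
      · rw [Finset.mem_sigma, mem_partn]
        exact ⟨isPartn_insert hQp hSs hSne, Finset.mem_insert_self _ _⟩
      · rw [Finset.erase_insert hSQ]
        exact hQall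
    · rintro ⟨P, B⟩ hx
      obtain ⟨hmem, _, _⟩ := Finset.mem_filter.mp hx
      obtain ⟨_, hBP⟩ := Finset.mem_sigma.mp hmem
      simp only
      rw [Finset.insert_erase hBP]
    · rintro ⟨S, Q⟩ hy
      obtain ⟨hS, hQ⟩ := Finset.mem_sigma.mp hy
      obtain ⟨hSs, hScard⟩ := Finset.mem_powersetCard.mp hS
      obtain ⟨hQp, hQall⟩ : IsPartn (s \ S) Q ∧ ∀ B ∈ Q, B.card = 2 := by
        have := Finset.mem_filter.mp hQ
        exact ⟨mem_partn.mp this.1, this.2⟩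
      have hSne : S.Nonempty := by rw [← Finset.card_pos, hScard]; exact hn
      have hSQ : S ∉ Q := not_mem_of_isPartn_sdiff hQp hSne
      simp only
      rw [Finset.erase_insert hSQ]
  rw [key, Finset.card_sigma]
  have hterm : ∀ S ∈ s.powersetCard n, (matchn (s \ S)).card = M' (s.card - n) := by
    intro S hS
    obtain ⟨hSs, hScard⟩ := Finset.mem_powersetCard.mp hS
    exact card_matchn _ _ (by rw [Finset.card_sdiff_of_subset hSs, hScard])
  rw [Finset.sum_congr rfl hterm, Finset.sum_const, smul_eq_mul, Finset.card_powersetCard]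

lemma clA_eq_count (k n : ℕ) (h1 : 1 ≤ n) (h2 : n ≤ k) :
    clA k n = ((k.choose n * M' (k - n) * (n - 1).factorial : ℕ) : ℝ) := by
  rcases Nat.even_or_odd (k - n) with ⟨j, hj⟩ | ⟨j, hj⟩
  · have hj2 : k - n = 2 * j := by omega
    rw [clA, if_pos ⟨h2, by omega⟩, hj2]
    rw [show 2 * j / 2 = j by omega]
    have hden : ((n : ℝ) * (j.factorial : ℝ) * 2 ^ j) ≠ 0 := by
      have h0 : (0:ℝ) < (n : ℝ) * (j.factorial : ℝ) * 2 ^ j := by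
        have : (0:ℝ) < (n:ℝ) := by exact_mod_cast h1
        positivity
      exact ne_of_gt h0
    rw [div_eq_iff hden]
    have e1 : (k.choose n : ℝ) * n.factorial * (k - n).factorial = k.factorial := by
      exact_mod_cast congrArg (Nat.cast : ℕ → ℝ) (Nat.choose_mul_factorial_mul_factorial h2)
    have e2 : (M' (2 * j) : ℝ) * ((j.factorial : ℝ) * 2 ^ j) = ((2 * j).factorial : ℝ) := by
      exact_mod_cast congrArg (Nat.cast : ℕ → ℝ) (M'_spec j)
    have e3 : (n : ℝ) * ((n - 1).factorial : ℝ) = (n.factorial : ℝ) := by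
      exact_mod_cast congrArg (Nat.cast : ℕ → ℝ) (Nat.mul_factorial_pred (by omega))
    push_cast
    symm
    calc (k.choose n : ℝ) * (M' (2 * j) : ℝ) * ((n - 1).factorial : ℝ)
        * ((n : ℝ) * (j.factorial : ℝ) * 2 ^ j)
        = (k.choose n : ℝ) * ((M' (2 * j) : ℝ) * ((j.factorial : ℝ) * 2 ^ j))
          * ((n : ℝ) * ((n - 1).factorial : ℝ)) := by ring
      _ = (k.choose n : ℝ) * ((2 * j).factorial : ℝ) * (n.factorial : ℝ) := by rw [e2, e3]
      _ = (k.choose n : ℝ) * (n.factorial : ℝ) * ((k - n).factorial : ℝ) := by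
          rw [hj2]; ring
      _ = (k.factorial : ℝ) := e1
  · have hodd : (k - n) % 2 = 1 := by omega
    rw [clA, if_neg (fun hc => by omega), show k - n = 2 * j + 1 by omega, M'_odd]
    simp

end ClAux

open ClAux in
/-- The linearization (Gâteaux derivative) of the classical cumulant-to-moment
transform at the standard Gaussian is given by the lower-triangular matrix
`A = (a_{k,n})`: for every direction `f`, the derivative of `ε ↦ M_k(c* + εf)` at
`ε = 0` is `∑_{n=1}^{k} a_{k,n} f(n)`. -/
theorem deriv_cumulantToMoment_at_gaussian (k : ℕ) (hk : 1 ≤ k) (f : ℕ → ℝ) :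
    HasDerivAt
      (fun ε : ℝ => cumulantToMoment k (fun j => gaussianCumulant j + ε * f j))
      (∑ n ∈ Finset.Icc 1 k, clA k n * f n) 0 := by
  classical
  have H : HasDerivAt
      (fun ε : ℝ => cumulantToMoment k (fun j => gaussianCumulant j + ε * f j))
      (∑ π : Finpartition (Finset.univ : Finset (Fin k)),
        ∑ B ∈ π.parts,
          (∏ B' ∈ π.parts.erase B,
            ((B'.card - 1).factorial : ℝ) * (gaussianCumulant B'.card + 0 * f B'.card))
          • (((B.card - 1).factorial : ℝ) * (1 * f B.card))) 0 := by
    unfold cumulantToMoment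
    apply HasDerivAt.fun_sum
    intro π _
    exact HasDerivAt.fun_finsetProd fun B _ =>
      HasDerivAt.const_mul _
        (((hasDerivAt_id (0:ℝ)).mul_const (f B.card)).const_add (gaussianCumulant B.card))
  have hfac : ∀ m : ℕ, ((m - 1).factorial : ℝ) * gaussianCumulant m
      = if m = 2 then 1 else 0 := by
    intro m
    by_cases h : m = 2 <;> simp [gaussianCumulant, h]
  have hval : (∑ π : Finpartition (Finset.univ : Finset (Fin k)),
        ∑ B ∈ π.parts,
          (∏ B' ∈ π.parts.erase B,
            ((B'.card - 1).factorial : ℝ) * (gaussianCumulant B'.card + 0 * f B'.card))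
          • (((B.card - 1).factorial : ℝ) * (1 * f B.card)))
      = ∑ n ∈ Finset.Icc 1 k, clA k n * f n := by
    simp only [zero_mul, add_zero, one_mul, smul_eq_mul]
    have step1 : ∀ (P : Finset (Finset (Fin k))) (B : Finset (Fin k)),
        (∏ B' ∈ P.erase B, ((B'.card - 1).factorial : ℝ) * gaussianCumulant B'.card)
        = if (∀ B' ∈ P.erase B, B'.card = 2) then (1:ℝ) else 0 := by
      intro P B
      rw [Finset.prod_congr rfl (fun B' _ => hfac B'.card), Finset.prod_boole]
      congr 1
    calc
      (∑ π : Finpartition (Finset.univ : Finset (Fin k)),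
          ∑ B ∈ π.parts,
            (∏ B' ∈ π.parts.erase B,
              ((B'.card - 1).factorial : ℝ) * gaussianCumulant B'.card)
            * (((B.card - 1).factorial : ℝ) * f B.card))
        = ∑ π : Finpartition (Finset.univ : Finset (Fin k)),
            ∑ B ∈ π.parts,
              (if (∀ B' ∈ π.parts.erase B, B'.card = 2) then (1:ℝ) else 0)
              * (((B.card - 1).factorial : ℝ) * f B.card) := by
          refine Finset.sum_congr rfl fun π _ => Finset.sum_congr rfl fun B _ => ?_
          rw [step1]
      _ = ∑ P ∈ partn (Finset.univ : Finset (Fin k)),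
            ∑ B ∈ P,
              (if (∀ B' ∈ P.erase B, B'.card = 2) then (1:ℝ) else 0)
              * (((B.card - 1).factorial : ℝ) * f B.card) :=
          sum_finpartition _ (fun P => ∑ B ∈ P,
            (if (∀ B' ∈ P.erase B, B'.card = 2) then (1:ℝ) else 0)
            * (((B.card - 1).factorial : ℝ) * f B.card))
      _ = ∑ x ∈ (partn (Finset.univ : Finset (Fin k))).sigma (fun P => P),
            (if (∀ B' ∈ x.1.erase x.2, B'.card = 2) then (1:ℝ) else 0)
            * (((x.2.card - 1).factorial : ℝ) * f x.2.card) :=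
          Finset.sum_sigma' _ _ _
      _ = ∑ n ∈ Finset.Icc 1 k,
            ∑ x ∈ ((partn (Finset.univ : Finset (Fin k))).sigma (fun P => P)).filter
              (fun x => x.2.card = n),
              (if (∀ B' ∈ x.1.erase x.2, B'.card = 2) then (1:ℝ) else 0)
              * (((x.2.card - 1).factorial : ℝ) * f x.2.card) := by
          refine (Finset.sum_fiberwise_of_maps_to ?_ _).symm
          rintro ⟨P, B⟩ hx
          obtain ⟨hP, hBP⟩ := Finset.mem_sigma.mp hx
          rw [mem_partn] at hP
          have hBne : B.Nonempty := by
            rw [Finset.nonempty_iff_ne_empty]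
            rintro rfl
            exact hP.2.2 hBP
          have hBsub : B ⊆ Finset.univ := subset_of_isPartn hP hBP
          refine Finset.mem_Icc.mpr ⟨Finset.card_pos.mpr hBne, ?_⟩
          calc B.card ≤ (Finset.univ : Finset (Fin k)).card := Finset.card_le_card hBsub
            _ = k := by simp
      _ = ∑ n ∈ Finset.Icc 1 k, clA k n * f n := by
          refine Finset.sum_congr rfl fun n hn => ?_
          obtain ⟨hn1, hnk⟩ := Finset.mem_Icc.mp hn
          have inner : ∑ x ∈ ((partn (Finset.univ : Finset (Fin k))).sigma (fun P => P)).filter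
              (fun x => x.2.card = n),
              (if (∀ B' ∈ x.1.erase x.2, B'.card = 2) then (1:ℝ) else 0)
              * (((x.2.card - 1).factorial : ℝ) * f x.2.card)
            = ∑ x ∈ ((partn (Finset.univ : Finset (Fin k))).sigma (fun P => P)).filter
              (fun x => x.2.card = n),
              (if (∀ B' ∈ x.1.erase x.2, B'.card = 2)
                then (((n - 1).factorial : ℝ) * f n) else 0) := by
            refine Finset.sum_congr rfl fun x hx => ?_
            have hc : x.2.card = n := (Finset.mem_filter.mp hx).2
            rw [hc, ite_mul, one_mul, zero_mul]
          rw [inner, ← Finset.sum_filter, Finset.filter_filter, Finset.sum_const,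
            nsmul_eq_mul]
          have hcount : (((partn (Finset.univ : Finset (Fin k))).sigma (fun P => P)).filter
              (fun x => x.2.card = n ∧ ∀ B' ∈ x.1.erase x.2, B'.card = 2)).card
              = k.choose n * M' (k - n) := by
            have := card_pairs (Finset.univ : Finset (Fin k)) n hn1
            simpa using this
          rw [hcount, clA_eq_count k n hn1 hnk]
          push_cast
          ring
  exact hval ▸ H
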